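/- arXiv:1806.01636 — 5 statements merged into one kernel-verified Lean document; each statement's English description precedes it below -/
import Mathlib

section
/- Let (𝒱,𝒯_#) be a natural space derived from the pre-natural space (V,#,⊑), and let a ∈ V be a basic dot. Then the set {z ∈ 𝒱 : z # a} is open in the natural topology 𝒯_#. -/
/-! # Natural Topology: basic framework (Waaldijk) -/

/-- A pre-natural space: a countable set of basic dots with a decidable
pre-apartness `apart` and a decidable refinement partial order `refines`. -/
structure PreNaturalSpace (V : Type) : Type where
  countable' : Countable V
  apart : V → V → Prop
  refines : V → V → Prop
  apart_dec : DecidableRel apart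
  refines_dec : DecidableRel refines
  apart_symm : ∀ a b, apart a b → apart b a
  apart_irrefl : ∀ a, ¬ apart a a
  apart_mono : ∀ a b c, refines a b → apart c b → apart c a
  refines_refl : ∀ a, refines a a
  refines_trans : ∀ a b c, refines a b → refines b c → refines a c
  refines_antisymm : ∀ a b, refines a b → refines b a → a = b

namespace PreNaturalSpace

variable {V W : Type}

/-- `a ≺ b` : strict refinement. -/
def strict (P : PreNaturalSpace V) (a b : V) : Prop := P.refines a b ∧ a ≠ b

/-- A point is a shrinking sequence of dots deciding every apart pair of dots. -/
structure IsPoint (P : PreNaturalSpace V) (p : ℕ → V) : Prop where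
  mono : ∀ n, P.refines (p (n + 1)) (p n)
  shrink : ∀ n, ∃ m, P.strict (p m) (p n)
  decides : ∀ a b, P.apart a b → ∃ m, P.apart (p m) a ∨ P.apart (p m) b

/-- The set of points of a pre-natural space. -/
def Pt (P : PreNaturalSpace V) : Type := { p : ℕ → V // P.IsPoint p }

/-- `p` begins with the dot `a` : some `p m ≺ a`. -/
def begins (P : PreNaturalSpace V) (p : ℕ → V) (a : V) : Prop := ∃ m, P.strict (p m) a

/-- Apartness between a dot and a point. -/
def dApart (P : PreNaturalSpace V) (a : V) (p : ℕ → V) : Prop := ∃ m, P.apart (p m) a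

/-- Apartness between points. -/
def pApart (P : PreNaturalSpace V) (p q : P.Pt) : Prop := ∃ n, P.apart (p.1 n) (q.1 n)

/-- Equivalence of points: the negation of apartness. -/
def pEquiv (P : PreNaturalSpace V) (p q : P.Pt) : Prop := ¬ P.pApart p q

variable (P : PreNaturalSpace V)

lemma refines_of_le {p : ℕ → V} (hp : ∀ n, P.refines (p (n + 1)) (p n)) :
    ∀ {m k : ℕ}, m ≤ k → P.refines (p k) (p m) := by
  intro m k h
  induction h with
  | refl => exact P.refines_refl _
  | step h ih => exact P.refines_trans _ _ _ (hp _) ih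

lemma begins_mono {z : ℕ → V} (hz : P.IsPoint z) {a b : V} (hab : P.refines a b)
    (h : P.begins z a) : P.begins z b := by
  obtain ⟨j, hj1, hj2⟩ := h
  have hzb : P.refines (z j) b := P.refines_trans _ _ _ hj1 hab
  by_cases he : z j = b
  · obtain ⟨i, hi1, hi2⟩ := hz.shrink j
    exact ⟨i, P.refines_trans _ _ _ hi1 hzb, fun h' => hi2 (h'.trans he.symm)⟩
  · exact ⟨j, hzb, he⟩

/-- The natural (apartness) topology as a predicate on subsets of the point set. -/
def NatOpen (U : Set P.Pt) : Prop :=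
  ∀ x ∈ U, ∀ y : P.Pt, P.pApart y x ∨ ∃ m, { z : P.Pt | P.begins z.1 (y.1 m) } ⊆ U

instance instTopPt : TopologicalSpace P.Pt where
  IsOpen := P.NatOpen
  isOpen_univ := fun _ _ _ => Or.inr ⟨0, fun _ _ => trivial⟩
  isOpen_inter := by
    intro U U' hU hU' x hx y
    rcases hU x hx.1 y with h | ⟨m, hm⟩
    · exact Or.inl h
    rcases hU' x hx.2 y with h | ⟨k, hk⟩
    · exact Or.inl h
    refine Or.inr ⟨max m k, fun z hz => ⟨hm ?_, hk ?_⟩⟩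
    · exact P.begins_mono z.2 (P.refines_of_le y.2.mono (le_max_left m k)) hz
    · exact P.begins_mono z.2 (P.refines_of_le y.2.mono (le_max_right m k)) hz
  isOpen_sUnion := by
    intro S hS x hx y
    obtain ⟨U, hU, hxU⟩ := hx
    rcases hS U hU x hxU y with h | ⟨m, hm⟩
    · exact Or.inl h
    · exact Or.inr ⟨m, fun z hz => ⟨U, hU, hm hz⟩⟩

lemma pEquiv_refl (p : P.Pt) : P.pEquiv p p := fun ⟨_, h⟩ => P.apart_irrefl _ h

lemma pEquiv_symm {p q : P.Pt} (h : P.pEquiv p q) : P.pEquiv q p :=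
  fun ⟨n, hn⟩ => h ⟨n, P.apart_symm _ _ hn⟩

lemma pEquiv_trans {p q r : P.Pt} (hpq : P.pEquiv p q) (hqr : P.pEquiv q r) :
    P.pEquiv p r := by
  rintro ⟨n, hn⟩
  obtain ⟨m, hm⟩ := q.2.decides (p.1 n) (r.1 n) hn
  rcases hm with hm | hm
  · -- q.1 m apart from p.1 n
    refine hpq ⟨max m n, ?_⟩
    have h1 : P.apart (p.1 n) (q.1 (max m n)) :=
      P.apart_mono _ _ _ (P.refines_of_le q.2.mono (le_max_left m n)) (P.apart_symm _ _ hm)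
    have h2 : P.apart (q.1 (max m n)) (p.1 (max m n)) :=
      P.apart_mono _ _ _ (P.refines_of_le p.2.mono (le_max_right m n)) (P.apart_symm _ _ h1)
    exact P.apart_symm _ _ h2
  · refine hqr ⟨max m n, ?_⟩
    have h1 : P.apart (r.1 n) (q.1 (max m n)) :=
      P.apart_mono _ _ _ (P.refines_of_le q.2.mono (le_max_left m n)) (P.apart_symm _ _ hm)
    exact P.apart_mono _ _ _ (P.refines_of_le r.2.mono (le_max_right m n))
      (P.apart_symm _ _ h1)

/-- The setoid of points modulo `≡`. -/
def ptSetoid : Setoid P.Pt :=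
  ⟨P.pEquiv, ⟨P.pEquiv_refl, P.pEquiv_symm, P.pEquiv_trans⟩⟩

/-- `â` : the set of points beginning with the dot `a`. -/
def hatSet (a : V) : Set P.Pt := { p | P.begins p.1 a }

/-- `ā` : the `≡`-closure of `â`. -/
def barSet (a : V) : Set P.Pt := { p | ∃ q : P.Pt, P.begins q.1 a ∧ P.pEquiv p q }

/-- A natural space is basic-open when every `ā` is open. -/
def BasicOpen : Prop := ∀ a : V, IsOpen (P.barSet a)

/-- Existence of a maximal dot. -/
def HasMaxDot : Prop := ∃ m, ∀ a, P.refines a m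

/-- Every basic dot begins at least one point. -/
def AllDotsInhabited : Prop := ∀ a : V, ∃ p : ℕ → V, P.IsPoint p ∧ P.begins p a

/-- The conditions making the point set of a pre-natural space a natural space. -/
def IsNaturalSpace : Prop := P.HasMaxDot ∧ P.AllDotsInhabited

end PreNaturalSpace

/-- A refinement morphism between (pre-)natural spaces: a map on dots sending
points to points and reflecting apartness of points. -/
structure RefMorphism {V W : Type} (P : PreNaturalSpace V) (Q : PreNaturalSpace W) : Type where
  toFun : V → W
  maps_points : ∀ p : ℕ → V, P.IsPoint p → Q.IsPoint (fun n => toFun (p n))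
  reflects_apart : ∀ p q : ℕ → V, P.IsPoint p → P.IsPoint q →
    (∃ n, Q.apart (toFun (p n)) (toFun (q n))) → ∃ n, P.apart (p n) (q n)

/-- The induced map on points of a refinement morphism. -/
def RefMorphism.pointMap {V W : Type} {P : PreNaturalSpace V} {Q : PreNaturalSpace W}
    (f : RefMorphism P Q) (p : P.Pt) : Q.Pt :=
  ⟨fun n => f.toFun (p.1 n), f.maps_points p.1 p.2⟩

namespace PreNaturalSpace

variable {V W : Type} (P : PreNaturalSpace V)

/-- Restriction of a pre-natural space to a subset of dots. -/
noncomputable def restrict (S : Set V) : PreNaturalSpace S where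
  countable' := by haveI := P.countable'; exact inferInstance
  apart a b := P.apart a.1 b.1
  refines a b := P.refines a.1 b.1
  apart_dec := Classical.decRel _
  refines_dec := Classical.decRel _
  apart_symm _ _ h := P.apart_symm _ _ h
  apart_irrefl a := P.apart_irrefl a.1
  apart_mono _ _ _ h1 h2 := P.apart_mono _ _ _ h1 h2
  refines_refl a := P.refines_refl a.1
  refines_trans _ _ _ h1 h2 := P.refines_trans _ _ _ h1 h2
  refines_antisymm _ _ h1 h2 := Subtype.ext (P.refines_antisymm _ _ h1 h2)

/-! ## Trail spaces -/

/-- A `≺`-trail: a finite strictly refining sequence `a₀ ≻ a₁ ≻ …`. -/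
def Trail : Type := { l : List V // l.Chain' fun a b => P.strict b a }

lemma strict_trans_flip : Transitive (fun a b : V => P.strict b a) := by
  rintro a b c ⟨h1, h1'⟩ ⟨h2, h2'⟩
  refine ⟨P.refines_trans _ _ _ h2 h1, fun he => ?_⟩
  exact h2' (P.refines_antisymm _ _ h2 (he ▸ h1))

lemma last_refines_of_prefix {a b : List V}
    (ha : a.Chain' fun x y => P.strict y x) (hpre : b <+: a)
    {x y : V} (hx : x ∈ a.getLast?) (hy : y ∈ b.getLast?) :
    P.refines x y := by
  haveI : IsTrans V (fun x y : V => P.strict y x) := ⟨fun _ _ _ h1 h2 => P.strict_trans_flip h1 h2⟩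
  have hpw : a.Pairwise fun x y => P.strict y x := List.isChain_iff_pairwise.mp ha
  obtain ⟨t, rfl⟩ := hpre
  rcases eq_or_ne t [] with rfl | ht
  · rw [List.append_nil] at hx
    have : x = y := by
      rw [Option.mem_def] at hx hy
      exact Option.some_injective _ (hx ▸ hy ▸ rfl)
    exact this ▸ P.refines_refl x
  · rw [List.getLast?_append_of_ne_nil _ ht] at hx
    have hxt : x ∈ t := List.mem_of_mem_getLast? hx
    have hyb : y ∈ b := List.mem_of_mem_getLast? hy
    have := (List.pairwise_append.mp hpw).2.2 y hyb x hxt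
    exact this.1

/-- The trail space of a pre-natural space: dots are `≺`-trails, with
`a ⊑* b` iff `b` is an initial segment of `a`, and `a #* b` iff the last
dots of `a` and `b` are apart. -/
noncomputable def trailSpace : PreNaturalSpace P.Trail where
  countable' := by haveI := P.countable'; exact inferInstanceAs (Countable
    { l : List V // l.Chain' fun a b => P.strict b a })
  apart a b := ∃ x ∈ a.1.getLast?, ∃ y ∈ b.1.getLast?, P.apart x y
  refines a b := b.1 <+: a.1
  apart_dec := Classical.decRel _
  refines_dec := Classical.decRel _
  apart_symm := by
    rintro a b ⟨x, hx, y, hy, hxy⟩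
    exact ⟨y, hy, x, hx, P.apart_symm _ _ hxy⟩
  apart_irrefl := by
    rintro a ⟨x, hx, y, hy, hxy⟩
    rw [Option.mem_def] at hx hy
    have : x = y := Option.some_injective _ (hx ▸ hy ▸ rfl)
    exact P.apart_irrefl x (this ▸ hxy)
  apart_mono := by
    rintro a b c hab ⟨x, hx, y, hy, hxy⟩
    have hbne : b.1 ≠ [] := by
      intro h
      rw [h] at hy
      simp at hy
    have hane : a.1 ≠ [] := by
      intro h
      exact hbne (List.prefix_nil.mp (h ▸ hab))
    obtain ⟨z, hz⟩ : ∃ z, z ∈ a.1.getLast? := by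
      rcases h : a.1.getLast? with _ | z
      · exact absurd (List.getLast?_eq_none_iff.mp h) hane
      · exact ⟨z, rfl⟩
    have hzy : P.refines z y := P.last_refines_of_prefix a.2 hab hz hy
    exact ⟨x, hx, z, hz, P.apart_mono _ _ _ hzy hxy⟩
  refines_refl a := List.prefix_refl a.1
  refines_trans _ _ _ h1 h2 := h2.trans h1
  refines_antisymm a b h1 h2 :=
    Subtype.ext (h2.eq_of_length (le_antisymm h2.length_le h1.length_le))

end PreNaturalSpace

open Classical in
/-- `p♯(n)` : the `≺`-trail obtained from `p₀, …, p_{n-1}` by deleting repetitions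
(for a shrinking sequence `p`, repetitions are consecutive). -/
noncomputable def segList {V : Type} (p : ℕ → V) : ℕ → List V
  | 0 => []
  | n + 1 =>
    if (segList p n).getLast? = some (p n) then segList p n
    else segList p n ++ [p n]

namespace PreNaturalSpace

variable {V W : Type} (P : PreNaturalSpace V)

/-- The map on trail dots sending a nonempty trail to its last element and
the empty trail to `m`. -/
def lastDot (m : V) (q : P.Trail) : V := q.1.getLast?.getD m

/-- `g` is the point map induced by a trail morphism `f` (a refinement morphism
on the trail space): `g p = f (p♯(0)), f (p♯(1)), …`. -/
def InducedByTrailMorphism (Q : PreNaturalSpace W) (f : RefMorphism P.trailSpace Q)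
    (g : P.Pt → Q.Pt) : Prop :=
  ∀ p : P.Pt, ∃ t : P.trailSpace.Pt, (∀ n, (t.1 n).1 = segList p.1 n) ∧ g p = f.pointMap t

/-- `g` is a natural morphism map: induced by a refinement morphism or by a trail morphism. -/
def IsNaturalMorphismMap (Q : PreNaturalSpace W) (g : P.Pt → Q.Pt) : Prop :=
  (∃ f : RefMorphism P Q, ∀ p, g p = f.pointMap p) ∨
  (∃ f : RefMorphism P.trailSpace Q, P.InducedByTrailMorphism Q f g)

/-- Two natural spaces are isomorphic: natural morphisms both ways, inverse up to `≡`. -/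
def AreIsomorphic (Q : PreNaturalSpace W) : Prop :=
  ∃ (f : P.Pt → Q.Pt) (g : Q.Pt → P.Pt),
    P.IsNaturalMorphismMap Q f ∧ Q.IsNaturalMorphismMap P g ∧
    (∀ x, P.pEquiv (g (f x)) x) ∧ (∀ y, Q.pEquiv (f (g y)) y)

/-- A natural space is a basic neighborhood space iff it is isomorphic to a basic-open space. -/
def IsBasicNbhdSpace : Prop :=
  ∃ (W' : Type) (Q : PreNaturalSpace W'), Q.IsNaturalSpace ∧ Q.BasicOpen ∧ P.AreIsomorphic Q

/-! ## Trees, treas, spreads, spraids, fans -/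

/-- `a` is a successor of `c`. -/
def IsSucc (a c : V) : Prop := P.strict a c ∧ ∀ b, P.strict a b → P.refines b c → b = c

/-- A successor-trail (as a list, each entry a successor of the previous one). -/
def SuccChain (l : List V) : Prop := l.Chain' fun x y => P.IsSucc y x

/-- A successor-trail from `m` to `a`. -/
def IsSuccTrailFromTo (m a : V) (l : List V) : Prop :=
  P.SuccChain l ∧ l.head? = some m ∧ l.getLast? = some a

/-- `(V,⊑)` is a tree. -/
def IsTree : Prop :=
  ∃ m, (∀ a, P.refines a m) ∧ ∀ a, ∃! l : List V, P.IsSuccTrailFromTo m a l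

/-- `(V,⊑)` is a trea. -/
def IsTrea : Prop :=
  ∃ m, (∀ a, P.refines a m) ∧ (∀ a, { b | P.refines a b }.Finite) ∧
    ∀ a, ∃ g : ℕ, ∀ l : List V, P.IsSuccTrailFromTo m a l → l.length = g

/-- Every infinite successor-trail is a point. -/
def SuccTrailsArePoints : Prop :=
  ∀ q : ℕ → V, (∀ n, P.IsSucc (q (n + 1)) (q n)) → P.IsPoint q

def IsSpread : Prop := P.IsTree ∧ P.SuccTrailsArePoints

def IsSpraid : Prop := P.IsTrea ∧ P.SuccTrailsArePoints

/-- Finitely branching: every dot has finitely many successors. -/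
def FinBranching : Prop := ∀ a : V, { b | P.IsSucc b a }.Finite

def IsFan : Prop := P.IsSpread ∧ P.FinBranching

def IsFann : Prop := P.IsSpraid ∧ P.FinBranching

end PreNaturalSpace

/-- For a natural space `(𝒱,𝒯_#)` derived from `(V,#,⊑)` and a basic
dot `a ∈ V`, the set `{z ∈ 𝒱 : z # a}` is open in the natural topology. -/
theorem stmt0 {V : Type} (P : PreNaturalSpace V) (hP : P.IsNaturalSpace) (a : V) :
    IsOpen { z : P.Pt | P.dApart a z.1 } := by
  intro x hx y
  obtain ⟨m, hm⟩ := hx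
  obtain ⟨k, hk⟩ := y.2.decides (x.1 m) a hm
  rcases hk with hk | hk
  · refine Or.inl ⟨max k m, ?_⟩
    have h1 : P.apart (x.1 m) (y.1 (max k m)) :=
      P.apart_mono _ _ _ (P.refines_of_le y.2.mono (le_max_left k m)) (P.apart_symm _ _ hk)
    have h2 : P.apart (y.1 (max k m)) (x.1 (max k m)) :=
      P.apart_mono _ _ _ (P.refines_of_le x.2.mono (le_max_right k m)) (P.apart_symm _ _ h1)
    exact h2
  · refine Or.inr ⟨k, fun z hz => ?_⟩
    obtain ⟨j, hj1, _⟩ := hz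
    exact ⟨j, P.apart_symm _ _ (P.apart_mono _ _ _ hj1 (P.apart_symm _ _ hk))⟩
end

section
/- The quotient ℛ/≡ of the natural real numbers with the quotient topology induced by 𝒯_ℝ# is homeomorphic to ℝ with its usual metric topology; a homeomorphism is induced by the map ρ sending a natural real to the unique real number it represents. -/
/-! ## The natural real numbers and the lean dyadic spraid σ_ℝ -/

/-- Basic dots for the natural reals: `none` is the maximal dot `(-∞,∞)`,
`some ⟨(p,q), _⟩` is the closed rational interval `[p,q]` with `p < q`. -/
def RDot : Type := Option { pq : ℚ × ℚ // pq.1 < pq.2 }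

/-- Apartness of rational intervals: a positive gap. -/
def rApart : RDot → RDot → Prop
  | some a, some b => b.1.2 < a.1.1 ∨ a.1.2 < b.1.1
  | _, _ => False

/-- Refinement of rational intervals: containment of closed intervals. -/
def rRefines : RDot → RDot → Prop
  | _, none => True
  | none, some _ => False
  | some a, some b => b.1.1 ≤ a.1.1 ∧ a.1.2 ≤ b.1.2

/-- The pre-natural space of the natural real numbers. -/
noncomputable def RPre : PreNaturalSpace RDot where
  countable' := by unfold RDot; infer_instance
  apart := rApart
  refines := rRefines
  apart_dec := Classical.decRel _
  refines_dec := Classical.decRel _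
  apart_symm := by
    rintro (_ | a) (_ | b) h <;> simp [rApart] at h ⊢ <;> tauto
  apart_irrefl := by
    rintro (_ | a) h
    · exact h
    · simp only [rApart] at h
      rcases h with h | h <;> exact absurd a.2 (not_lt.mpr h.le)
  apart_mono := by
    rintro (_ | a) (_ | b) (_ | c) hab hcb <;>
      simp [rApart, rRefines] at hab hcb ⊢
    rcases hcb with h | h
    · exact Or.inl (lt_of_le_of_lt hab.2 h)
    · exact Or.inr (lt_of_lt_of_le h hab.1)
  refines_refl := by rintro (_ | a) <;> simp [rRefines]
  refines_trans := by
    rintro (_ | a) (_ | b) (_ | c) h1 h2 <;> simp [rRefines] at h1 h2 ⊢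
    exact ⟨le_trans h2.1 h1.1, le_trans h1.2 h2.2⟩
  refines_antisymm := by
    rintro (_ | a) (_ | b) h1 h2 <;> simp [rRefines] at h1 h2 ⊢
    · rfl
    have : a.1 = b.1 := Prod.ext (le_antisymm h2.1 h1.1) (le_antisymm h1.2 h2.2)
    exact congrArg some (Subtype.ext this)

lemma dyadic_lt (n : ℤ) (m : ℕ) : (n : ℚ) / 2 ^ m < ((n : ℚ) + 2) / 2 ^ m := by
  have h2 : (0 : ℚ) < 2 ^ m := by positivity
  rw [div_lt_div_iff_of_pos_right h2]
  linarith

/-- The lean dyadic interval `[n/2^m, (n+2)/2^m]` as a dot of the natural reals. -/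
def leanIv (n : ℤ) (m : ℕ) : RDot :=
  some ⟨((n : ℚ) / 2 ^ m, ((n : ℚ) + 2) / 2 ^ m), dyadic_lt n m⟩

/-- The basic dots of `σ_ℝ` : the maximal dot together with the lean dyadic intervals. -/
def IsLeanDyadic : Set RDot := { d | d = none ∨ ∃ (n : ℤ) (m : ℕ), d = leanIv n m }

/-- The spraid `σ_ℝ` of lean dyadic intervals, with the apartness and refinement
of the natural reals. -/
noncomputable def SigPre : PreNaturalSpace IsLeanDyadic := RPre.restrict IsLeanDyadic

/-- The unique real number represented by a natural real: the supremum of the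
left endpoints of its intervals. -/
noncomputable def rhoR (x : RPre.Pt) : ℝ :=
  sSup { r : ℝ | ∃ (n : ℕ) (pq : { pq : ℚ × ℚ // pq.1 < pq.2 }),
    x.1 n = some pq ∧ r = (pq.1.1 : ℝ) }

/-- The unique real number represented by a point of `σ_ℝ`. -/
noncomputable def rhoSig (x : SigPre.Pt) : ℝ :=
  sSup { r : ℝ | ∃ (n : ℕ) (pq : { pq : ℚ × ℚ // pq.1 < pq.2 }),
    (x.1 n).1 = some pq ∧ r = (pq.1.1 : ℝ) }

/-! ### Auxiliary lemmas for stmt2 -/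

namespace Stmt2Aux

abbrev Iv := { pq : ℚ × ℚ // pq.1 < pq.2 }

/-- The set whose sup is `rhoR x`. -/
def S (x : RPre.Pt) : Set ℝ :=
  { r : ℝ | ∃ (n : ℕ) (pq : Iv), x.1 n = some pq ∧ r = (pq.1.1 : ℝ) }

lemma rhoR_eq (x : RPre.Pt) : rhoR x = sSup (S x) := rfl

lemma refines_some {a : RDot} {b : Iv} (h : rRefines a (some b)) :
    ∃ a' : Iv, a = some a' ∧ b.1.1 ≤ a'.1.1 ∧ a'.1.2 ≤ b.1.2 := by
  match a with
  | none => exact absurd h (by simp [rRefines])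
  | some a' => exact ⟨a', rfl, h.1, h.2⟩

lemma some_stable (x : RPre.Pt) {n k : ℕ} (h : n ≤ k) {a : Iv} (ha : x.1 n = some a) :
    ∃ b : Iv, x.1 k = some b ∧ a.1.1 ≤ b.1.1 ∧ b.1.2 ≤ a.1.2 := by
  have hr : rRefines (x.1 k) (x.1 n) := RPre.refines_of_le x.2.mono h
  rw [ha] at hr
  exact refines_some hr

lemma exists_some (x : RPre.Pt) (n : ℕ) : ∃ (k : ℕ) (a : Iv), n ≤ k ∧ x.1 k = some a := by
  rcases h0 : x.1 n with _ | a
  · obtain ⟨m, hm1, hm2⟩ := x.2.shrink n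
    have hm1' : rRefines (x.1 m) (x.1 n) := hm1
    rcases hma : x.1 m with _ | a
    · exact absurd (hma ▸ h0 ▸ rfl) hm2
    · obtain ⟨b, hb, _⟩ := some_stable x (le_max_left m n) hma
      exact ⟨max m n, b, le_max_right m n, hb⟩
  · exact ⟨n, a, le_refl n, h0⟩

lemma left_le_right (x : RPre.Pt) {n k : ℕ} {a b : Iv}
    (ha : x.1 n = some a) (hb : x.1 k = some b) : a.1.1 ≤ b.1.2 := by
  rcases le_total n k with h | h
  · obtain ⟨b', hb', h1, h2⟩ := some_stable x h ha
    rw [hb] at hb'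
    cases hb'
    exact le_trans h1 b.2.le
  · obtain ⟨a', ha', h1, h2⟩ := some_stable x h hb
    rw [ha] at ha'
    cases ha'
    exact le_trans a.2.le h2

lemma S_nonempty (x : RPre.Pt) : (S x).Nonempty := by
  obtain ⟨k, a, _, hk⟩ := exists_some x 0
  exact ⟨(a.1.1 : ℝ), k, a, hk, rfl⟩

lemma S_bddAbove (x : RPre.Pt) {k : ℕ} {b : Iv} (hb : x.1 k = some b) :
    (b.1.2 : ℝ) ∈ upperBounds (S x) := by
  rintro r ⟨n, a, ha, rfl⟩
  exact_mod_cast left_le_right x ha hb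

lemma rho_mem (x : RPre.Pt) {n : ℕ} {a : Iv} (h : x.1 n = some a) :
    (a.1.1 : ℝ) ≤ rhoR x ∧ rhoR x ≤ (a.1.2 : ℝ) := by
  constructor
  · exact le_csSup ⟨_, S_bddAbove x h⟩ ⟨n, a, h, rfl⟩
  · exact csSup_le (S_nonempty x) (S_bddAbove x h)

lemma width_step (x : RPre.Pt) {n : ℕ} {a : Iv} (h : x.1 n = some a) :
    ∃ (k : ℕ) (b : Iv), x.1 k = some b ∧
      (b.1.2 - b.1.1 : ℚ) ≤ (3/4) * (a.1.2 - a.1.1) := by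
  set p := a.1.1 with hp
  set q := a.1.2 with hq
  have hw : 0 < q - p := sub_pos.mpr a.2
  have hA : p < p + (q - p)/2 := by linarith
  have hB : p + (5/8) * (q - p) < q := by linarith
  set A : RDot := some ⟨(p, p + (q - p)/2), hA⟩ with hAd
  set B : RDot := some ⟨(p + (5/8) * (q - p), q), hB⟩ with hBd
  have hab : RPre.apart A B := by
    show rApart A B
    rw [hAd, hBd]
    exact Or.inr (show p + (q - p)/2 < p + (5/8) * (q - p) by linarith)
  obtain ⟨m, hm⟩ := x.2.decides A B hab
  obtain ⟨b, hb, hb1, hb2⟩ := some_stable x (le_max_right m n) h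
  have hdown : ∀ C : RDot, RPre.apart (x.1 m) C → RPre.apart (x.1 (max m n)) C := by
    intro C hC
    have h1 : RPre.refines (x.1 (max m n)) (x.1 m) := RPre.refines_of_le x.2.mono (le_max_left m n)
    exact RPre.apart_symm _ _ (RPre.apart_mono _ _ _ h1 (RPre.apart_symm _ _ hC))
  refine ⟨max m n, b, hb, ?_⟩
  rcases hm with hm | hm
  · have h2 : rApart (x.1 (max m n)) A := hdown A hm
    rw [hb, hAd] at h2
    rcases h2 with h2 | h2
    · have h2' : p + (q - p)/2 < b.1.1 := h2
      linarith
    · have h2' : b.1.2 < p := h2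
      have := b.2
      linarith
  · have h2 : rApart (x.1 (max m n)) B := hdown B hm
    rw [hb, hBd] at h2
    rcases h2 with h2 | h2
    · have h2' : q < b.1.1 := h2
      have := b.2
      linarith
    · have h2' : b.1.2 < p + (5/8) * (q - p) := h2
      linarith

lemma width_pow (x : RPre.Pt) {a : Iv} {n : ℕ} (h : x.1 n = some a) (j : ℕ) :
    ∃ (k : ℕ) (b : Iv), x.1 k = some b ∧
      (b.1.2 - b.1.1 : ℚ) ≤ (3/4) ^ j * (a.1.2 - a.1.1) := by
  induction j with
  | zero => exact ⟨n, a, h, by simp⟩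
  | succ j ih =>
    obtain ⟨k, b, hb, hw⟩ := ih
    obtain ⟨k', b', hb', hw'⟩ := width_step x hb
    refine ⟨k', b', hb', ?_⟩
    calc (b'.1.2 - b'.1.1 : ℚ) ≤ (3/4) * (b.1.2 - b.1.1) := hw'
      _ ≤ (3/4) * ((3/4) ^ j * (a.1.2 - a.1.1)) := by
          apply mul_le_mul_of_nonneg_left hw; norm_num
      _ = (3/4) ^ (j + 1) * (a.1.2 - a.1.1) := by ring

lemma width_small (x : RPre.Pt) (ε : ℚ) (hε : 0 < ε) :
    ∃ (n : ℕ) (a : Iv), x.1 n = some a ∧ a.1.2 - a.1.1 < ε := by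
  obtain ⟨k, a, _, hk⟩ := exists_some x 0
  have hw : (0:ℚ) < a.1.2 - a.1.1 := sub_pos.mpr a.2
  obtain ⟨j, hj⟩ := exists_pow_lt_of_lt_one (div_pos hε hw) (by norm_num : (3/4 : ℚ) < 1)
  obtain ⟨n, b, hb, hwb⟩ := width_pow x hk j
  refine ⟨n, b, hb, lt_of_le_of_lt hwb ?_⟩
  rw [lt_div_iff₀ hw] at hj
  linarith

lemma rho_lt_apart {x y : RPre.Pt} (h : rhoR x < rhoR y) : RPre.pApart x y := by
  obtain ⟨ε, hε0, hε⟩ := exists_rat_btwn (by linarith : (0:ℝ) < (rhoR y - rhoR x)/3)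
  have hε0' : (0:ℚ) < ε := by exact_mod_cast hε0
  obtain ⟨n, a, ha, hwa⟩ := width_small x ε hε0'
  obtain ⟨m, b, hb, hwb⟩ := width_small y ε hε0'
  have hxa := rho_mem x ha
  have hyb := rho_mem y hb
  have hab : (a.1.2 : ℝ) < (b.1.1 : ℝ) := by
    have h1 : ((a.1.2 : ℚ) : ℝ) - (a.1.1 : ℚ) < (ε : ℝ) := by exact_mod_cast hwa
    have h2 : ((b.1.2 : ℚ) : ℝ) - (b.1.1 : ℚ) < (ε : ℝ) := by exact_mod_cast hwb
    push_cast at h1 h2 ⊢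
    linarith [hxa.1, hxa.2, hyb.1, hyb.2]
  have hab' : a.1.2 < b.1.1 := by exact_mod_cast hab
  obtain ⟨a', ha', ha1, ha2⟩ := some_stable x (le_max_left n m) ha
  obtain ⟨b', hb', hb1, hb2⟩ := some_stable y (le_max_right n m) hb
  refine ⟨max n m, ?_⟩
  show rApart (x.1 (max n m)) (y.1 (max n m))
  rw [ha', hb']
  exact Or.inr (show a'.1.2 < b'.1.1 by linarith)

lemma rho_apart_of_ne {x y : RPre.Pt} (h : rhoR x ≠ rhoR y) : RPre.pApart x y := by
  rcases lt_or_gt_of_ne h with h | h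
  · exact rho_lt_apart h
  · obtain ⟨n, hn⟩ := rho_lt_apart h
    exact ⟨n, RPre.apart_symm _ _ hn⟩

lemma rApart_some {a b : RDot} (h : rApart a b) :
    ∃ (a' b' : Iv), a = some a' ∧ b = some b' ∧ (b'.1.2 < a'.1.1 ∨ a'.1.2 < b'.1.1) := by
  match a, b with
  | some a', some b' => exact ⟨a', b', rfl, rfl, h⟩
  | none, _ => exact absurd h (by simp [rApart])
  | some _, none => exact absurd h (by simp [rApart])

lemma rho_eq_of_equiv {x y : RPre.Pt} (h : RPre.pEquiv x y) : rhoR x = rhoR y :=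
  by_contra fun hne => h (rho_apart_of_ne hne)

lemma rho_ne_of_apart {x y : RPre.Pt} (h : RPre.pApart x y) : rhoR x ≠ rhoR y := by
  obtain ⟨n, hn⟩ := h
  obtain ⟨a, b, ha, hb, hab⟩ := rApart_some (hn : rApart (x.1 n) (y.1 n))
  have hxa := rho_mem x ha
  have hyb := rho_mem y hb
  rcases hab with h | h
  · have : (b.1.2 : ℝ) < (a.1.1 : ℝ) := by exact_mod_cast h
    intro he; rw [he] at hxa; linarith [hxa.1, hyb.2]
  · have : (a.1.2 : ℝ) < (b.1.1 : ℝ) := by exact_mod_cast h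
    intro he; rw [he] at hxa; linarith [hxa.2, hyb.1]

lemma eps_div_lt {ε X : ℝ} (hε : 0 < ε) {m : ℕ} (hm : ((1:ℝ)/2)^m < X/ε) :
    ε/2^m < X := by
  have h1 : ((1:ℝ)/2)^m = (2^m)⁻¹ := by rw [div_pow, one_pow, one_div]
  rw [lt_div_iff₀ hε] at hm
  calc ε/2^m = (2^m)⁻¹ * ε := by rw [div_eq_inv_mul]
    _ = ((1:ℝ)/2)^m * ε := by rw [h1]
    _ < X := hm

/-- Construction of a standard point representing `r`, starting strictly inside `[A,B]`. -/
lemma exists_point (r : ℝ) (A B : ℚ) (hA : (A:ℝ) < r) (hB : r < (B:ℝ)) (hAB : A < B) :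
    ∃ z : RPre.Pt, rhoR z = r ∧ RPre.strict (z.1 0) (some ⟨(A,B), hAB⟩) ∧
      ∀ n, ∃ a : Iv, z.1 n = some a ∧ (a.1.1 : ℝ) < r ∧ r < (a.1.2 : ℝ) := by
  set ε : ℝ := min (r - A) (B - r) with hε
  have hε0 : 0 < ε := lt_min (by linarith) (by linarith)
  have hc : ∀ n : ℕ, ∃ c : ℚ, r - ε/2^n < (c:ℝ) ∧ (c:ℝ) < r - ε/2^(n+1) := by
    intro n
    apply exists_rat_btwn
    have h1 : (0:ℝ) < 2^n := by positivity
    have h2 : ε/2^(n+1) < ε/2^n := by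
      apply div_lt_div_of_pos_left hε0 h1
      exact pow_lt_pow_right₀ one_lt_two (Nat.lt_succ_self n)
    linarith
  have hd : ∀ n : ℕ, ∃ d : ℚ, r + ε/2^(n+1) < (d:ℝ) ∧ (d:ℝ) < r + ε/2^n := by
    intro n
    apply exists_rat_btwn
    have h1 : (0:ℝ) < 2^n := by positivity
    have h2 : ε/2^(n+1) < ε/2^n := by
      apply div_lt_div_of_pos_left hε0 h1
      exact pow_lt_pow_right₀ one_lt_two (Nat.lt_succ_self n)
    linarith
  choose c hc1 hc2 using hc
  choose d hd1 hd2 using hd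
  have hεpow : ∀ n : ℕ, (0:ℝ) < ε/2^n := fun n => by positivity
  have hcr : ∀ n, (c n : ℝ) < r := fun n => lt_trans (hc2 n) (by linarith [hεpow (n+1)])
  have hrd : ∀ n, r < (d n : ℝ) := fun n => lt_trans (by linarith [hεpow (n+1)]) (hd1 n)
  have hcd : ∀ n, c n < d n := fun n => by exact_mod_cast lt_trans (hcr n) (hrd n)
  have hcmono : ∀ n, (c n : ℝ) < (c (n+1) : ℝ) := fun n => lt_trans (hc2 n) (hc1 (n+1))
  have hdmono : ∀ n, (d (n+1) : ℝ) < (d n : ℝ) := fun n => lt_trans (hd2 (n+1)) (hd1 n)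
  set z : ℕ → RDot := fun n => some ⟨(c n, d n), hcd n⟩ with hz
  have hmono : ∀ n, RPre.refines (z (n+1)) (z n) := by
    intro n
    show rRefines (z (n+1)) (z n)
    constructor
    · exact_mod_cast (hcmono n).le
    · exact_mod_cast (hdmono n).le
  have hne : ∀ n, z (n+1) ≠ z n := by
    intro n h
    have h1 := congrArg (fun o : RDot => (o.map (fun v => v.1.1)).getD 0) h
    simp only [hz, Option.map_some, Option.getD_some] at h1
    exact absurd (hcmono n) (by rw [h1]; exact lt_irrefl _)
  have hpt : RPre.IsPoint z := by
    refine ⟨hmono, fun n => ⟨n+1, hmono n, hne n⟩, ?_⟩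
    intro a b hab
    obtain ⟨a', b', rfl, rfl, hab'⟩ := rApart_some hab
    have key : ∀ (u : Iv), ((u.1.2 : ℝ) < r ∨ r < (u.1.1 : ℝ)) →
        ∃ m, rApart (z m) (some u) := by
      rintro u (hu | hu)
      · -- u entirely below r : eventually c m > u.1.2
        obtain ⟨m, hm⟩ := exists_pow_lt_of_lt_one
          (div_pos (by linarith : (0:ℝ) < r - u.1.2) hε0) (by norm_num : (1/2:ℝ) < 1)
        have h2 : ε/2^m < r - (u.1.2:ℝ) := eps_div_lt hε0 hm
        have : (u.1.2 : ℝ) < c m := by linarith [hc1 m]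
        exact ⟨m, Or.inl (by exact_mod_cast this)⟩
      · obtain ⟨m, hm⟩ := exists_pow_lt_of_lt_one
          (div_pos (by linarith : (0:ℝ) < (u.1.1:ℝ) - r) hε0) (by norm_num : (1/2:ℝ) < 1)
        have h2 : ε/2^m < (u.1.1:ℝ) - r := eps_div_lt hε0 hm
        have : (d m : ℝ) < u.1.1 := by linarith [hd2 m]
        exact ⟨m, Or.inr (by exact_mod_cast this)⟩
    rcases hab' with h | h
    · -- b'.2 < a'.1 : b' is below or a' above, depending on r
      rcases lt_or_ge r ((a'.1.1:ℝ)) with hr | hr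
      · obtain ⟨m, hm⟩ := key a' (Or.inr hr)
        exact ⟨m, Or.inl hm⟩
      · have : (b'.1.2 : ℝ) < r := lt_of_lt_of_le (by exact_mod_cast h) hr
        obtain ⟨m, hm⟩ := key b' (Or.inl this)
        exact ⟨m, Or.inr hm⟩
    · rcases lt_or_ge r ((b'.1.1:ℝ)) with hr | hr
      · obtain ⟨m, hm⟩ := key b' (Or.inr hr)
        exact ⟨m, Or.inr hm⟩
      · have : (a'.1.2 : ℝ) < r := lt_of_lt_of_le (by exact_mod_cast h) hr
        obtain ⟨m, hm⟩ := key a' (Or.inl this)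
        exact ⟨m, Or.inl hm⟩
  refine ⟨⟨z, hpt⟩, ?_, ?_, ?_⟩
  · -- rhoR = r
    have hmem : ∀ n : ℕ, (c n : ℝ) ≤ rhoR ⟨z, hpt⟩ ∧ rhoR ⟨z, hpt⟩ ≤ (d n : ℝ) := by
      intro n
      exact rho_mem ⟨z, hpt⟩ (show z n = some ⟨(c n, d n), hcd n⟩ from rfl)
    set ρ := rhoR ⟨z, hpt⟩ with hρ
    by_contra hne'
    rcases lt_or_gt_of_ne hne' with hlt | hgt
    · -- ρ < r : but c n → r, c n ≤ ρ
      obtain ⟨m, hm⟩ := exists_pow_lt_of_lt_one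
        (div_pos (by linarith : (0:ℝ) < r - ρ) hε0) (by norm_num : (1/2:ℝ) < 1)
      have h2 : ε/2^m < r - ρ := eps_div_lt hε0 hm
      linarith [(hmem m).1, hc1 m]
    · obtain ⟨m, hm⟩ := exists_pow_lt_of_lt_one
        (div_pos (by linarith : (0:ℝ) < ρ - r) hε0) (by norm_num : (1/2:ℝ) < 1)
      have h2 : ε/2^m < ρ - r := eps_div_lt hε0 hm
      linarith [(hmem m).2, hd2 m]
  · -- strict below [A,B]
    have hc0 : (A:ℝ) < c 0 := by
      have := hc1 0
      have hεA : ε ≤ r - A := min_le_left _ _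
      simp only [pow_zero, div_one] at this
      linarith
    have hd0 : (d 0 : ℝ) < B := by
      have := hd2 0
      have hεB : ε ≤ B - r := min_le_right _ _
      simp only [pow_zero, div_one] at this
      linarith
    constructor
    · show rRefines (z 0) (some ⟨(A,B), hAB⟩)
      exact ⟨by exact_mod_cast hc0.le, by exact_mod_cast hd0.le⟩
    · intro h
      have h1 := congrArg (fun o : RDot => (o.map (fun v => v.1.1)).getD 0) h
      simp only [hz, Option.map_some, Option.getD_some] at h1
      rw [h1] at hc0
      exact lt_irrefl _ hc0
  · intro n
    exact ⟨⟨(c n, d n), hcd n⟩, rfl, hcr n, hrd n⟩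

lemma pApart_symm {x y : RPre.Pt} (h : RPre.pApart x y) : RPre.pApart y x := by
  obtain ⟨n, hn⟩ := h
  exact ⟨n, RPre.apart_symm _ _ hn⟩

lemma rho_continuous : Continuous rhoR := by
  rw [continuous_def]
  intro U hU
  show RPre.NatOpen (rhoR ⁻¹' U)
  intro x hx y
  by_cases h : rhoR y = rhoR x
  · rw [Metric.isOpen_iff] at hU
    obtain ⟨ε, hε0, hball⟩ := hU (rhoR x) hx
    obtain ⟨ε', hε'0, hε'⟩ := exists_rat_btwn hε0
    have hε'0' : (0:ℚ) < ε' := by exact_mod_cast hε'0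
    obtain ⟨m, b, hb, hwb⟩ := width_small y ε' hε'0'
    have hyb := rho_mem y hb
    refine Or.inr ⟨m, ?_⟩
    intro w hw
    obtain ⟨j, hj1, _⟩ := hw
    have hj1' : rRefines (w.1 j) (y.1 m) := hj1
    rw [hb] at hj1'
    obtain ⟨w', hw', hw1, hw2⟩ := refines_some hj1'
    have hwm := rho_mem w hw'
    apply hball
    rw [Metric.mem_ball, Real.dist_eq]
    have hcast : ((b.1.2 : ℚ) : ℝ) - (b.1.1 : ℚ) < (ε' : ℝ) := by exact_mod_cast hwb
    have hc1 : ((b.1.1 : ℚ) : ℝ) ≤ (w'.1.1 : ℝ) := by exact_mod_cast hw1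
    have hc2 : ((w'.1.2 : ℚ) : ℝ) ≤ (b.1.2 : ℝ) := by exact_mod_cast hw2
    rw [abs_lt, ← h]
    constructor
    · linarith [hwm.1, hwm.2, hyb.1, hyb.2]
    · linarith [hwm.1, hwm.2, hyb.1, hyb.2]
  · exact Or.inl (rho_apart_of_ne h)

lemma rho_openMap :
    IsOpenMap (Quotient.lift rhoR (fun _ _ h => rho_eq_of_equiv h) :
      Quotient RPre.ptSetoid → ℝ) := by
  intro U hU
  have hV : RPre.NatOpen (Quotient.mk RPre.ptSetoid ⁻¹' U) :=
    hU.preimage continuous_quotient_mk'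
  rw [Metric.isOpen_iff]
  rintro t ⟨q, hqU, rfl⟩
  obtain ⟨x, rfl⟩ := Quotient.exists_rep q
  obtain ⟨A, hA⟩ := exists_rat_lt (rhoR x)
  obtain ⟨B, hB⟩ := exists_rat_gt (rhoR x)
  have hAB : A < B := by exact_mod_cast hA.trans hB
  obtain ⟨y, hy, _, hyall⟩ := exists_point (rhoR x) A B hA hB hAB
  have hyx : RPre.pEquiv y x := fun hap => rho_ne_of_apart hap hy
  have hyU : y ∈ Quotient.mk RPre.ptSetoid ⁻¹' U := by
    show Quotient.mk _ y ∈ U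
    rwa [Quotient.sound hyx]
  rcases hV y hyU y with hap | ⟨m, hm⟩
  · exact absurd hap (RPre.pEquiv_refl y)
  obtain ⟨b, hbm, hb1, hb2⟩ := hyall m
  refine ⟨min (rhoR x - b.1.1) (b.1.2 - rhoR x), lt_min (by linarith) (by linarith), ?_⟩
  intro s hs
  rw [Metric.mem_ball, Real.dist_eq, abs_lt] at hs
  simp only [Quotient.lift_mk] at hs
  have hmin1 := min_le_left (rhoR x - (b.1.1:ℝ)) ((b.1.2:ℝ) - rhoR x)
  have hmin2 := min_le_right (rhoR x - (b.1.1:ℝ)) ((b.1.2:ℝ) - rhoR x)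
  have hs1 : (b.1.1 : ℝ) < s := by linarith [hs.1]
  have hs2 : s < (b.1.2 : ℝ) := by linarith [hs.2]
  obtain ⟨w, hw, hwstrict, _⟩ := exists_point s b.1.1 b.1.2 hs1 hs2 b.2
  have hwmem : w ∈ {z : RPre.Pt | RPre.begins z.1 (y.1 m)} := by
    refine ⟨0, ?_⟩
    rw [hbm]
    exact hwstrict
  exact ⟨Quotient.mk _ w, hm hwmem, hw⟩

end Stmt2Aux

/-- `ρ` sends each natural real into all of its intervals
(it is the unique real number represented), and it induces a homeomorphism
from `ℛ/≡` (with the quotient of the natural topology) onto `ℝ`. -/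
theorem stmt2 :
    (∀ (x : RPre.Pt) (n : ℕ) (pq : { pq : ℚ × ℚ // pq.1 < pq.2 }), x.1 n = some pq →
      (pq.1.1 : ℝ) ≤ rhoR x ∧ rhoR x ≤ (pq.1.2 : ℝ)) ∧
    ∃ h : Quotient RPre.ptSetoid ≃ₜ ℝ,
      ∀ x : RPre.Pt, h (Quotient.mk RPre.ptSetoid x) = rhoR x := by
  refine ⟨fun x n pq h => Stmt2Aux.rho_mem x h, ?_⟩
  have hinj : Function.Injective
      (Quotient.lift rhoR (fun _ _ h => Stmt2Aux.rho_eq_of_equiv h) :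
        Quotient RPre.ptSetoid → ℝ) := by
    intro q1 q2 h
    obtain ⟨x, rfl⟩ := Quotient.exists_rep q1
    obtain ⟨y, rfl⟩ := Quotient.exists_rep q2
    exact Quotient.sound (fun hap => Stmt2Aux.rho_ne_of_apart hap h)
  have hsurj : Function.Surjective
      (Quotient.lift rhoR (fun _ _ h => Stmt2Aux.rho_eq_of_equiv h) :
        Quotient RPre.ptSetoid → ℝ) := by
    intro r
    obtain ⟨A, hA⟩ := exists_rat_lt r
    obtain ⟨B, hB⟩ := exists_rat_gt r
    obtain ⟨z, hz, _, _⟩ := Stmt2Aux.exists_point r A B hA hB (by exact_mod_cast hA.trans hB)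
    exact ⟨Quotient.mk _ z, hz⟩
  have hcont : Continuous
      (Quotient.lift rhoR (fun _ _ h => Stmt2Aux.rho_eq_of_equiv h) :
        Quotient RPre.ptSetoid → ℝ) :=
    Stmt2Aux.rho_continuous.quotient_lift _
  exact ⟨Equiv.toHomeomorphOfContinuousOpen
    (Equiv.ofBijective _ ⟨hinj, hsurj⟩) hcont Stmt2Aux.rho_openMap, fun x => rfl⟩
end

section
/- Let f be a refinement morphism from a natural space 𝒱 to a natural space 𝒲. Then the induced map p ↦ f(p) from the point set 𝒱 to the point set 𝒲 is continuous with respect to the natural topologies. -/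
namespace PreNaturalSpace

variable {V : Type} (P : PreNaturalSpace V)

lemma strict_of_refines_strict {a b c : V} (h1 : P.refines a b) (h2 : P.strict b c) :
    P.strict a c := by
  refine ⟨P.refines_trans _ _ _ h1 h2.1, fun he => ?_⟩
  exact h2.2 (P.refines_antisymm _ _ h2.1 (he ▸ h1))

lemma strict_of_strict_refines {a b c : V} (h1 : P.strict a b) (h2 : P.refines b c) :
    P.strict a c := by
  refine ⟨P.refines_trans _ _ _ h1.1 h2, fun he => ?_⟩
  have hbc : b = c := P.refines_antisymm _ _ h2 (he ▸ h1.1)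
  exact h1.2 (he.trans hbc.symm)

lemma open_saturated {U : Set P.Pt} (hU : P.NatOpen U) {x x' : P.Pt}
    (hx : x ∈ U) (hxx' : P.pEquiv x' x) : x' ∈ U := by
  rcases hU x hx x' with h | ⟨m, hm⟩
  · exact absurd h hxx'
  · obtain ⟨j, hj⟩ := x'.2.shrink m
    exact hm ⟨j, hj⟩

end PreNaturalSpace

/-- the induced point map of a refinement morphism between natural
spaces is continuous for the natural topologies. -/
theorem stmt3 {V W : Type} (P : PreNaturalSpace V) (Q : PreNaturalSpace W)
    (hP : P.IsNaturalSpace) (hQ : Q.IsNaturalSpace) (f : RefMorphism P Q) :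
    Continuous f.pointMap := by
  rw [continuous_def]
  intro U hU
  have hU' : Q.NatOpen U := hU
  show P.NatOpen (f.pointMap ⁻¹' U)
  intro x hx y
  by_cases hyx : P.pApart y x
  · exact Or.inl hyx
  -- f y ≡ f x, hence f y ∈ U
  have hequiv : Q.pEquiv (f.pointMap y) (f.pointMap x) := by
    rintro ⟨n, hn⟩
    exact hyx (f.reflects_apart y.1 x.1 y.2 x.2 ⟨n, hn⟩)
  have hfy : f.pointMap y ∈ U := Q.open_saturated hU' hx hequiv
  rcases hU' _ hfy (f.pointMap y) with h | ⟨m, hm⟩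
  · obtain ⟨n, hn⟩ := h
    exact absurd hn (Q.apart_irrefl _)
  obtain ⟨i, hi⟩ := (f.pointMap y).2.shrink m
  refine Or.inr ⟨i, fun z hz => ?_⟩
  obtain ⟨j, hj⟩ := hz
  -- hybrid point w : follows y up to index i, then the tail of z
  set w : ℕ → V := fun n => if n ≤ i then y.1 n else z.1 (j + (n - i - 1)) with hw
  have hwle : ∀ n, n ≤ i → w n = y.1 n := fun n h => by simp [hw, h]
  have hwgt : ∀ n, i < n → w n = z.1 (j + (n - i - 1)) := fun n h => by
    simp [hw, Nat.not_le.mpr h]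
  have hwP : P.IsPoint w := by
    constructor
    · intro n
      rcases lt_trichotomy n i with h | rfl | h
      · rw [hwle n h.le, hwle (n+1) h]
        exact y.2.mono n
      · rw [hwle n le_rfl, hwgt (n+1) (Nat.lt_succ_self n)]
        simpa using hj.1
      · rw [hwgt n h, hwgt (n+1) (h.trans (Nat.lt_succ_self n))]
        have : n + 1 - i - 1 = (n - i - 1) + 1 := by omega
        rw [this]
        exact z.2.mono _
    · intro n
      rcases le_or_gt n i with h | h
      · refine ⟨i + 1, ?_⟩
        rw [hwgt (i+1) (Nat.lt_succ_self i), hwle n h]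
        have hjj : j + (i + 1 - i - 1) = j := by omega
        rw [hjj]
        exact P.strict_of_strict_refines hj (P.refines_of_le y.2.mono h)
      · set t := j + (n - i - 1) with ht
        obtain ⟨m', hm'⟩ := z.2.shrink t
        set s := max m' t with hs
        have hst : P.strict (z.1 s) (z.1 t) :=
          P.strict_of_refines_strict (P.refines_of_le z.2.mono (le_max_left m' t)) hm'
        refine ⟨i + 1 + (s - j), ?_⟩
        have hsj : j ≤ s := le_trans (by omega) (le_max_right m' t)
        rw [hwgt _ (by omega), hwgt n h]
        have : j + (i + 1 + (s - j) - i - 1) = s := by omega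
        rw [this]
        exact hst
    · intro a b hab
      obtain ⟨m', hm'⟩ := z.2.decides a b hab
      set s := max m' j with hs
      have hsr : P.refines (z.1 s) (z.1 m') := P.refines_of_le z.2.mono (le_max_left m' j)
      refine ⟨i + 1 + (s - j), ?_⟩
      rw [hwgt _ (by omega)]
      have hsj : j ≤ s := le_max_right m' j
      have : j + (i + 1 + (s - j) - i - 1) = s := by omega
      rw [this]
      rcases hm' with hm' | hm'
      · exact Or.inl (P.apart_symm _ _ (P.apart_mono _ _ _ hsr (P.apart_symm _ _ hm')))
      · exact Or.inr (P.apart_symm _ _ (P.apart_mono _ _ _ hsr (P.apart_symm _ _ hm')))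
  set wPt : P.Pt := ⟨w, hwP⟩ with hwPt
  have hfw : f.pointMap wPt ∈ U := by
    apply hm
    refine ⟨i, ?_⟩
    show Q.strict (f.toFun (w i)) ((f.pointMap y).1 m)
    rw [hwle i le_rfl]
    exact hi
  -- f w ≡ f z
  have heq : Q.pEquiv (f.pointMap z) (f.pointMap wPt) := by
    rintro ⟨n, hn⟩
    -- hn : Q.apart (f (z n)) (f (w n))
    set N := n + i + 1 with hN
    set t := j + n with htdef
    have hwN : w N = z.1 t := by
      rw [hwgt N (by omega)]
      have : j + (N - i - 1) = t := by omega
      rw [this]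
    have h1 : Q.refines ((f.pointMap wPt).1 N) ((f.pointMap wPt).1 n) :=
      Q.refines_of_le (f.pointMap wPt).2.mono (by omega)
    have h2 : Q.apart ((f.pointMap wPt).1 N) (f.toFun (z.1 n)) :=
      Q.apart_symm _ _ (Q.apart_mono _ _ _ h1 hn)
    have h3 : Q.refines ((f.pointMap z).1 t) ((f.pointMap z).1 n) :=
      Q.refines_of_le (f.pointMap z).2.mono (by omega)
    have h4 : Q.apart ((f.pointMap wPt).1 N) ((f.pointMap z).1 t) :=
      Q.apart_mono _ _ _ h3 h2
    have h5 : (f.pointMap wPt).1 N = (f.pointMap z).1 t := by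
      show f.toFun (w N) = f.toFun (z.1 t)
      rw [hwN]
    exact Q.apart_irrefl _ (h5 ▸ h4)
  exact Q.open_saturated hU' hfw heq
end

section
/- Let 𝒱 be a natural space derived from (V,#,⊑). Then (V^path,#*,⊑*) is a pre-natural space whose space of points 𝒱^path is a natural space, and 𝒱^path is homeomorphic to 𝒱: the map p ↦ (p♯(0),p♯(1),p♯(2),…) sends points of 𝒱 to points of 𝒱^path and induces a homeomorphism of the quotient spaces 𝒱/≡ and 𝒱^path/≡, whose inverse is induced by the map sending a nonempty trail a₀,…,a_n to its last element a_n and the empty trail to the maximal dot. -/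
/-! ## Auxiliary lemmas for Statement 4 -/

namespace Stmt4Aux

open PreNaturalSpace

variable {V : Type} (P : PreNaturalSpace V)

lemma not_apart_of_refines {a b : V} (h : P.refines a b) : ¬ P.apart a b :=
  fun hab => P.apart_irrefl a (P.apart_mono a b a h hab)

lemma not_apart_max {m : V} (hm : ∀ x, P.refines x m) (a : V) : ¬ P.apart m a :=
  fun h => not_apart_of_refines P (hm a) (P.apart_symm _ _ h)

lemma shrink_ge {p : ℕ → V} (hp : P.IsPoint p) (n N : ℕ) :
    ∃ k, N ≤ k ∧ P.strict (p k) (p n) := by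
  obtain ⟨k, hk⟩ := hp.shrink n
  refine ⟨max k N, le_max_right _ _, ?_, ?_⟩
  · exact P.refines_trans _ _ _ (P.refines_of_le hp.mono (le_max_left k N)) hk.1
  · intro he
    exact hk.2 (P.refines_antisymm _ _ hk.1
      (he ▸ P.refines_of_le hp.mono (le_max_left k N)))

lemma shrink_gt {p : ℕ → V} (hp : P.IsPoint p) {n k : ℕ} (hk : P.strict (p k) (p n)) :
    n < k := by
  by_contra h
  push_neg at h
  exact hk.2 (P.refines_antisymm _ _ hk.1 (P.refines_of_le hp.mono h))

lemma apart_bump {p : ℕ → V} (hmono : ∀ n, P.refines (p (n + 1)) (p n)) {a : V} {k : ℕ}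
    (h : P.apart (p k) a) {k' : ℕ} (hk : k ≤ k') : P.apart (p k') a :=
  P.apart_symm _ _ (P.apart_mono _ _ _ (P.refines_of_le hmono hk) (P.apart_symm _ _ h))

lemma begins_max {m : V} (hm : ∀ x, P.refines x m) {p : ℕ → V} (hp : P.IsPoint p) :
    P.begins p m := by
  obtain ⟨k, hk⟩ := hp.shrink 0
  exact P.begins_mono hp (hm (p 0)) ⟨k, hk⟩

lemma shift_isPoint {p : ℕ → V} (hp : P.IsPoint p) (j : ℕ) :
    P.IsPoint fun n => p (j + n) := by
  refine ⟨fun n => hp.mono (j + n), fun n => ?_, fun a b hab => ?_⟩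
  · obtain ⟨k, hk1, hk2⟩ := shrink_ge P hp (j + n) j
    exact ⟨k - j, by rwa [Nat.add_sub_cancel' hk1]⟩
  · obtain ⟨k, hk⟩ := hp.decides a b hab
    rcases hk with hk | hk
    · exact ⟨k, Or.inl (apart_bump P hp.mono hk (Nat.le_add_left k j))⟩
    · exact ⟨k, Or.inr (apart_bump P hp.mono hk (Nat.le_add_left k j))⟩

/-! ### segList lemmas -/

lemma segList_getLast? (p : ℕ → V) (n : ℕ) :
    (segList p (n + 1)).getLast? = some (p n) := by
  rw [segList]
  split
  · assumption
  · exact List.getLast?_concat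

lemma segList_ne_nil (p : ℕ → V) (n : ℕ) : segList p (n + 1) ≠ [] := by
  intro h
  have := segList_getLast? p n
  rw [h] at this
  simp at this

lemma segList_succ_eq_or (p : ℕ → V) (n : ℕ) :
    segList p (n + 1) = segList p n ∨ segList p (n + 1) = segList p n ++ [p n] := by
  rw [segList]
  split
  · exact Or.inl rfl
  · exact Or.inr rfl

lemma segList_prefix_succ (p : ℕ → V) (n : ℕ) : segList p n <+: segList p (n + 1) := by
  rcases segList_succ_eq_or p n with h | h
  · rw [h]
  · rw [h]
    exact List.prefix_append _ _

lemma segList_prefix (p : ℕ → V) {k n : ℕ} (h : k ≤ n) : segList p k <+: segList p n := by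
  induction h with
  | refl => exact List.prefix_refl _
  | step _ ih => exact ih.trans (segList_prefix_succ p _)

lemma segList_head? (p : ℕ → V) (n : ℕ) : (segList p (n + 1)).head? = some (p 0) := by
  induction n with
  | zero =>
    rw [segList]
    split
    · next h => simp [segList] at h
    · simp [segList]
  | succ n ih =>
    rcases segList_succ_eq_or p (n + 1) with h | h <;> rw [h]
    · exact ih
    · rw [List.head?_append_of_ne_nil _ (segList_ne_nil p n), ih]

lemma segList_chain' {p : ℕ → V} (hmono : ∀ n, P.refines (p (n + 1)) (p n)) (n : ℕ) :
    (segList p n).Chain' fun a b => P.strict b a := by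
  induction n with
  | zero => exact List.isChain_nil
  | succ n ih =>
    rw [segList]
    split
    · exact ih
    · next h =>
      refine List.isChain_append.mpr ⟨ih, List.isChain_singleton _, ?_⟩
      intro x hx y hy
      rw [List.head?_cons, Option.mem_def, Option.some_inj] at hy
      subst hy
      match n, hx with
      | 0, hx => simp [segList] at hx
      | k + 1, hx =>
        rw [segList_getLast? p k, Option.mem_def, Option.some_inj] at hx
        subst hx
        refine ⟨P.refines_of_le hmono (Nat.le_succ k), fun he => ?_⟩
        rw [segList_getLast? p k] at h
        exact h (by rw [he])

lemma segList_grows {p : ℕ → V} (hp : P.IsPoint p) (n : ℕ) :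
    ∃ k, segList p n <+: segList p k ∧ segList p n ≠ segList p k := by
  obtain ⟨j, hj⟩ := hp.shrink n
  have hnj : n < j := shrink_gt P hp hj
  refine ⟨j + 1, segList_prefix p (by omega), fun he => ?_⟩
  have hlast := segList_getLast? p j
  rw [← he] at hlast
  match n, hlast with
  | 0, hlast => simp [segList] at hlast
  | k + 1, hlast =>
    rw [segList_getLast? p k, Option.some_inj] at hlast
    -- p j = p k, but p j ≺ p (k+1) ⊑ p k
    have h1 : P.refines (p (k + 1)) (p k) := hp.mono k
    rw [hlast] at h1
    exact hj.2 (P.refines_antisymm _ _ hj.1 h1)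

/-! ### Trail lemmas -/

lemma trail_pairwise (a : P.Trail) : a.1.Pairwise fun x y => P.strict y x := by
  haveI : IsTrans V (fun x y : V => P.strict y x) :=
    ⟨fun _ _ _ h1 h2 => P.strict_trans_flip h1 h2⟩
  exact List.isChain_iff_pairwise.mp a.2

lemma last_strict_of_strict_prefix {a b : P.Trail} (h : b.1 <+: a.1) (hne : a.1 ≠ b.1)
    {x y : V} (hx : a.1.getLast? = some x) (hy : b.1.getLast? = some y) : P.strict x y := by
  obtain ⟨t, ht⟩ := h
  have htne : t ≠ [] := by
    intro h0
    rw [h0, List.append_nil] at ht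
    exact hne ht.symm
  have hx' : x ∈ t := by
    rw [← ht, List.getLast?_append_of_ne_nil _ htne] at hx
    exact List.mem_of_mem_getLast? hx
  have hy' : y ∈ b.1 := List.mem_of_mem_getLast? hy
  have hpw := trail_pairwise P a
  rw [← ht] at hpw
  exact (List.pairwise_append.mp hpw).2.2 y hy' x hx'

lemma lastDot_of_getLast? {m : V} {q : P.Trail} {x : V} (h : q.1.getLast? = some x) :
    P.lastDot m q = x := by
  rw [PreNaturalSpace.lastDot, h, Option.getD_some]

lemma lastDot_of_nil {m : V} {q : P.Trail} (h : q.1 = []) : P.lastDot m q = m := by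
  rw [PreNaturalSpace.lastDot, h]
  rfl

lemma lastDot_refines {m : V} (hm : ∀ x, P.refines x m) {a b : P.Trail} (h : b.1 <+: a.1) :
    P.refines (P.lastDot m a) (P.lastDot m b) := by
  rcases hb : b.1.getLast? with _ | y
  · rw [lastDot_of_nil P (List.getLast?_eq_none_iff.mp hb)]
    exact hm _
  · have hbne : b.1 ≠ [] := by
      intro h0
      rw [h0] at hb
      simp at hb
    have hane : a.1 ≠ [] := fun h0 => hbne (List.prefix_nil.mp (h0 ▸ h))
    rcases ha : a.1.getLast? with _ | x
    · exact absurd (List.getLast?_eq_none_iff.mp ha) hane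
    · rw [lastDot_of_getLast? P ha, lastDot_of_getLast? P hb]
      exact P.last_refines_of_prefix a.2 h ha hb

lemma lastDot_refines_max {m : V} (hm : ∀ x, P.refines x m) (q : P.Trail) :
    P.refines (P.lastDot m q) m := by
  rcases hb : q.1.getLast? with _ | y
  · rw [lastDot_of_nil P (List.getLast?_eq_none_iff.mp hb)]
    exact hm m
  · rw [lastDot_of_getLast? P hb]
    exact hm y

/-! ### Extension trail points -/

lemma ext_chain' {l : List V} (hl : l.Chain' fun a b => P.strict b a)
    {p : ℕ → V} (hmono : ∀ n, P.refines (p (n + 1)) (p n))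
    (hj : ∀ x ∈ l.getLast?, P.strict (p 0) x) (n : ℕ) :
    (l ++ segList p n).Chain' fun a b => P.strict b a := by
  refine List.isChain_append.mpr ⟨hl, segList_chain' P hmono n, ?_⟩
  intro x hx y hy
  match n, hy with
  | 0, hy => simp [segList] at hy
  | n + 1, hy =>
    rw [Option.mem_def, segList_head? p n, Option.some_inj] at hy
    subst hy
    exact hj x hx

lemma ext_isPoint (l : P.Trail) {p : ℕ → V} (hp : P.IsPoint p)
    (hj : ∀ x ∈ l.1.getLast?, P.strict (p 0) x) :
    P.trailSpace.IsPoint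
      (fun n => (⟨l.1 ++ segList p n, ext_chain' P l.2 hp.mono hj n⟩ : P.Trail)) := by
  refine ⟨fun n => ?_, fun n => ?_, fun a b hab => ?_⟩
  · exact (List.prefix_append_right_inj l.1).mpr (segList_prefix_succ p n)
  · obtain ⟨k, hk1, hk2⟩ := segList_grows P hp n
    refine ⟨k, (List.prefix_append_right_inj l.1).mpr hk1, fun he => ?_⟩
    exact hk2 (List.append_cancel_left (congrArg Subtype.val he)).symm
  · obtain ⟨x, hx, y, hy, hxy⟩ := hab
    obtain ⟨k, hk⟩ := hp.decides x y hxy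
    have hlast : (l.1 ++ segList p (k + 1)).getLast? = some (p k) := by
      rw [List.getLast?_append_of_ne_nil _ (segList_ne_nil p k), segList_getLast? p k]
    rcases hk with hk | hk
    · exact ⟨k + 1, Or.inl ⟨p k, hlast, x, hx, hk⟩⟩
    · exact ⟨k + 1, Or.inr ⟨p k, hlast, y, hy, hk⟩⟩

lemma ext_begins (l : P.Trail) {p : ℕ → V} (hp : P.IsPoint p)
    (hj : ∀ x ∈ l.1.getLast?, P.strict (p 0) x) :
    P.trailSpace.begins
      (fun n => (⟨l.1 ++ segList p n, ext_chain' P l.2 hp.mono hj n⟩ : P.Trail)) l := by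
  refine ⟨1, List.prefix_append _ _, fun he => ?_⟩
  have h1 : l.1 ++ segList p 1 = l.1 := congrArg Subtype.val he
  have h2 : (segList p 1).length = 0 := by
    have := congrArg List.length h1
    rw [List.length_append] at this
    omega
  exact segList_ne_nil p 0 (List.length_eq_zero_iff.mp h2)

/-! ### The maps F and G -/

noncomputable def Fmap (p : P.Pt) : P.trailSpace.Pt :=
  ⟨fun n => ⟨segList p.1 n, segList_chain' P p.2.mono n⟩,
   ext_isPoint P ⟨[], List.isChain_nil⟩ p.2 (by simp)⟩

lemma G_isPoint (m : V) (hm : ∀ x, P.refines x m) (q : P.trailSpace.Pt) :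
    P.IsPoint fun n => P.lastDot m (q.1 n) := by
  refine ⟨fun n => ?_, fun n => ?_, fun a b hab => ?_⟩
  · exact lastDot_refines P hm (q.2.mono n)
  · obtain ⟨k1, hk1⟩ := q.2.shrink n
    rcases hqn : (q.1 n).1.getLast? with _ | y
    · have hqn' : (q.1 n).1 = [] := List.getLast?_eq_none_iff.mp hqn
      obtain ⟨k2, hk2⟩ := q.2.shrink k1
      have h1 : (q.1 k1).1 ≠ [] := by
        intro h0
        exact hk1.2 (Subtype.ext (h0.trans hqn'.symm))
      rcases ha : (q.1 k1).1.getLast? with _ | x1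
      · exact absurd (List.getLast?_eq_none_iff.mp ha) h1
      rcases hb : (q.1 k2).1.getLast? with _ | x2
      · exact absurd (List.prefix_nil.mp ((List.getLast?_eq_none_iff.mp hb) ▸ hk2.1)) h1
      refine ⟨k2, ?_⟩
      rw [lastDot_of_getLast? P hb, lastDot_of_nil P hqn']
      have hs : P.strict x2 x1 :=
        last_strict_of_strict_prefix P hk2.1 (fun he => hk2.2 (Subtype.ext he)) hb ha
      refine ⟨hm x2, fun he => ?_⟩
      subst he
      exact hs.2 (P.refines_antisymm _ _ hs.1 (hm x1))
    · have h1 : (q.1 k1).1 ≠ [] := by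
        intro h0
        have h2 : (q.1 n).1 = [] := List.prefix_nil.mp (h0 ▸ hk1.1)
        rw [h2] at hqn
        simp at hqn
      rcases ha : (q.1 k1).1.getLast? with _ | x1
      · exact absurd (List.getLast?_eq_none_iff.mp ha) h1
      refine ⟨k1, ?_⟩
      rw [lastDot_of_getLast? P ha, lastDot_of_getLast? P hqn]
      exact last_strict_of_strict_prefix P hk1.1 (fun he => hk1.2 (Subtype.ext he)) ha hqn
  · obtain ⟨k, hk⟩ := q.2.decides ⟨[a], List.isChain_singleton a⟩ ⟨[b], List.isChain_singleton b⟩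
      ⟨a, by simp, b, by simp, hab⟩
    rcases hk with ⟨x, hx, y, hy, hxy⟩ | ⟨x, hx, y, hy, hxy⟩
    · simp only [List.getLast?_singleton, Option.mem_def, Option.some_inj] at hy
      subst hy
      refine ⟨k, Or.inl ?_⟩
      rw [lastDot_of_getLast? P (Option.mem_def.mp hx)]
      exact hxy
    · simp only [List.getLast?_singleton, Option.mem_def, Option.some_inj] at hy
      subst hy
      refine ⟨k, Or.inr ?_⟩
      rw [lastDot_of_getLast? P (Option.mem_def.mp hx)]
      exact hxy

noncomputable def Gmap (m : V) (hm : ∀ x, P.refines x m) (q : P.trailSpace.Pt) : P.Pt :=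
  ⟨fun n => P.lastDot m (q.1 n), G_isPoint P m hm q⟩

/-! ### Reflection and equivalence lemmas -/

lemma F_reflects {p p' : P.Pt} (h : P.trailSpace.pApart (Fmap P p) (Fmap P p')) :
    P.pApart p p' := by
  obtain ⟨n, x, hx, y, hy, hxy⟩ := h
  match n, hx, hy with
  | 0, hx, hy => simp [Fmap, segList] at hx
  | n + 1, hx, hy =>
    rw [Option.mem_def] at hx hy
    have hx' : (segList p.1 (n + 1)).getLast? = some x := hx
    have hy' : (segList p'.1 (n + 1)).getLast? = some y := hy
    rw [segList_getLast?, Option.some_inj] at hx' hy'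
    exact ⟨n, hx' ▸ hy' ▸ hxy⟩

lemma G_reflects (m : V) (hm : ∀ x, P.refines x m) {q q' : P.trailSpace.Pt}
    (h : P.pApart (Gmap P m hm q) (Gmap P m hm q')) : P.trailSpace.pApart q q' := by
  obtain ⟨n, hn⟩ := h
  rcases ha : (q.1 n).1.getLast? with _ | x
  · rw [show (Gmap P m hm q).1 n = P.lastDot m (q.1 n) from rfl,
      lastDot_of_nil P (List.getLast?_eq_none_iff.mp ha)] at hn
    exact absurd hn (not_apart_max P hm _)
  rcases hb : (q'.1 n).1.getLast? with _ | y
  · rw [show (Gmap P m hm q').1 n = P.lastDot m (q'.1 n) from rfl,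
      lastDot_of_nil P (List.getLast?_eq_none_iff.mp hb)] at hn
    exact absurd (P.apart_symm _ _ hn) (not_apart_max P hm _)
  rw [show (Gmap P m hm q).1 n = P.lastDot m (q.1 n) from rfl,
    show (Gmap P m hm q').1 n = P.lastDot m (q'.1 n) from rfl,
    lastDot_of_getLast? P ha, lastDot_of_getLast? P hb] at hn
  exact ⟨n, x, Option.mem_def.mpr ha, y, Option.mem_def.mpr hb, hn⟩

lemma GF_equiv (m : V) (hm : ∀ x, P.refines x m) (p : P.Pt) :
    P.pEquiv (Gmap P m hm (Fmap P p)) p := by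
  rintro ⟨n, hn⟩
  have hn' : P.apart (P.lastDot m ⟨segList p.1 n, segList_chain' P p.2.mono n⟩) (p.1 n) := hn
  match n, hn' with
  | 0, hn' =>
    rw [lastDot_of_nil P (q := ⟨segList p.1 0, segList_chain' P p.2.mono 0⟩) (by simp [segList])] at hn'
    exact not_apart_max P hm _ hn'
  | k + 1, hn' =>
    rw [lastDot_of_getLast? P (q := ⟨segList p.1 (k + 1), segList_chain' P p.2.mono (k + 1)⟩) (segList_getLast? p.1 k)] at hn'
    exact not_apart_of_refines P (p.2.mono k) (P.apart_symm _ _ hn')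

lemma FG_equiv (m : V) (hm : ∀ x, P.refines x m) (q : P.trailSpace.Pt) :
    P.trailSpace.pEquiv (Fmap P (Gmap P m hm q)) q := by
  rintro ⟨n, x, hx, y, hy, hxy⟩
  match n, hx, hy with
  | 0, hx, hy => simp [Fmap, segList] at hx
  | k + 1, hx, hy =>
    rw [Option.mem_def] at hx hy
    have hx' : (segList (fun i => P.lastDot m (q.1 i)) (k + 1)).getLast? = some x := hx
    rw [segList_getLast?, Option.some_inj] at hx'
    have hpre : (q.1 k).1 <+: (q.1 (k + 1)).1 := q.2.mono k
    rcases ha : (q.1 k).1.getLast? with _ | z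
    · rw [lastDot_of_nil P (List.getLast?_eq_none_iff.mp ha)] at hx'
      exact not_apart_max P hm y (hx' ▸ hxy)
    · rw [lastDot_of_getLast? P ha] at hx'
      have hr : P.refines y z :=
        P.last_refines_of_prefix (q.1 (k + 1)).2 hpre hy (Option.mem_def.mpr ha)
      exact not_apart_of_refines P hr (P.apart_symm _ _ (hx'.symm ▸ hxy))

/-! ### Continuity lemmas -/

lemma F_cont_aux {U : Set P.trailSpace.Pt} (hU : IsOpen U)
    (hsat : ∀ z z' : P.trailSpace.Pt, z ∈ U → P.trailSpace.pEquiv z' z → z' ∈ U) :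
    IsOpen (Fmap P ⁻¹' U) := by
  have hU' : P.trailSpace.NatOpen U := hU
  show P.NatOpen _
  intro x hx y
  rcases hU' (Fmap P x) hx (Fmap P y) with h | ⟨k, hk⟩
  · exact Or.inl (F_reflects P h)
  · have hk' : { z : P.trailSpace.Pt | P.trailSpace.begins z.1 ((Fmap P y).1 (k + 1)) } ⊆ U := by
      intro z hz
      exact hk (P.trailSpace.begins_mono z.2 ((Fmap P y).2.mono k) hz)
    refine Or.inr ⟨k, fun z hz => ?_⟩
    obtain ⟨j, hj⟩ := hz
    have hz' : P.IsPoint fun i => z.1 (j + i) := shift_isPoint P z.2 j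
    have hjc : ∀ x' ∈ ((Fmap P y).1 (k + 1)).1.getLast?, P.strict (z.1 (j + 0)) x' := by
      intro x' hx'
      have : (segList y.1 (k + 1)).getLast? = some x' := hx'
      rw [segList_getLast?, Option.some_inj] at this
      exact this ▸ hj
    set l : P.Trail := (Fmap P y).1 (k + 1) with hl
    set T : P.trailSpace.Pt :=
      ⟨fun n => ⟨l.1 ++ segList (fun i => z.1 (j + i)) n, ext_chain' P l.2 hz'.mono hjc n⟩,
       ext_isPoint P l hz' hjc⟩ with hT
    have hTU : T ∈ U := hk' (ext_begins P l hz' hjc)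
    refine hsat T (Fmap P z) hTU ?_
    rintro ⟨n, x', hx', y', hy', hxy⟩
    cases n with
    | zero => simp [Fmap, segList] at hx'
    | succ n =>
      have hx'' : (segList z.1 (n + 1)).getLast? = some x' := hx'
      rw [segList_getLast?, Option.some_inj] at hx''
      have hy'' : (l.1 ++ segList (fun i => z.1 (j + i)) (n + 1)).getLast? = some y' := hy'
      rw [List.getLast?_append_of_ne_nil _ (segList_ne_nil _ n), segList_getLast?,
        Option.some_inj] at hy''
      subst hx''
      subst hy''
      exact not_apart_of_refines P (P.refines_of_le z.2.mono (Nat.le_add_left n j))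
        (P.apart_symm _ _ hxy)

lemma G_cont_aux (m : V) (hm : ∀ x, P.refines x m) {U : Set P.Pt} (hU : IsOpen U)
    (hsat : ∀ z z' : P.Pt, z ∈ U → P.pEquiv z' z → z' ∈ U) :
    IsOpen (Gmap P m hm ⁻¹' U) := by
  have hU' : P.NatOpen U := hU
  show P.trailSpace.NatOpen _
  intro q hq t
  rcases hU' (Gmap P m hm q) hq (Gmap P m hm t) with h | ⟨k, hk⟩
  · exact Or.inl (G_reflects P m hm h)
  · rcases ha : (t.1 k).1.getLast? with _ | a
    · refine Or.inr ⟨0, fun s _ => ?_⟩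
      apply hk
      show P.begins (Gmap P m hm s).1 (P.lastDot m (t.1 k))
      rw [lastDot_of_nil P (List.getLast?_eq_none_iff.mp ha)]
      exact begins_max P hm (Gmap P m hm s).2
    · refine Or.inr ⟨k, fun s hs => ?_⟩
      apply hk
      obtain ⟨j, hj⟩ := hs
      have hne : (s.1 j).1 ≠ [] := by
        intro h0
        have h1 : (t.1 k).1 = [] := List.prefix_nil.mp (h0 ▸ hj.1)
        rw [h1] at ha
        simp at ha
      rcases hb : (s.1 j).1.getLast? with _ | b
      · exact absurd (List.getLast?_eq_none_iff.mp hb) hne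
      have hs' : P.strict b a :=
        last_strict_of_strict_prefix P hj.1 (fun he => hj.2 (Subtype.ext he)) hb ha
      show P.begins (Gmap P m hm s).1 (P.lastDot m (t.1 k))
      rw [lastDot_of_getLast? P ha]
      refine ⟨j, ?_⟩
      show P.strict (P.lastDot m (s.1 j)) a
      rw [lastDot_of_getLast? P hb]
      exact hs'

/-! ### The homeomorphism -/

noncomputable def homeo (m : V) (hm : ∀ x, P.refines x m) :
    Quotient P.ptSetoid ≃ₜ Quotient P.trailSpace.ptSetoid where
  toFun := Quotient.lift (fun p => Quotient.mk P.trailSpace.ptSetoid (Fmap P p))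
    (fun _ _ hab => Quotient.sound fun hap => hab (F_reflects P hap))
  invFun := Quotient.lift (fun q => Quotient.mk P.ptSetoid (Gmap P m hm q))
    (fun _ _ hab => Quotient.sound fun hap => hab (G_reflects P m hm hap))
  left_inv := Quotient.ind fun p => Quotient.sound (GF_equiv P m hm p)
  right_inv := Quotient.ind fun q => Quotient.sound (FG_equiv P m hm q)
  continuous_toFun := by
    refine Continuous.quotient_lift ?_ _
    refine continuous_def.mpr fun W hW => ?_
    have hmk : Continuous (Quotient.mk P.trailSpace.ptSetoid) := continuous_quot_mk
    have hU : IsOpen (Quotient.mk P.trailSpace.ptSetoid ⁻¹' W) := hW.preimage hmk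
    have heq : (fun p => Quotient.mk P.trailSpace.ptSetoid (Fmap P p)) ⁻¹' W =
        Fmap P ⁻¹' (Quotient.mk P.trailSpace.ptSetoid ⁻¹' W) := rfl
    rw [heq]
    refine F_cont_aux P hU fun z z' hz hzz' => ?_
    show Quotient.mk P.trailSpace.ptSetoid z' ∈ W
    rwa [Quotient.sound (s := P.trailSpace.ptSetoid) hzz']
  continuous_invFun := by
    refine Continuous.quotient_lift ?_ _
    refine continuous_def.mpr fun W hW => ?_
    have hmk : Continuous (Quotient.mk P.ptSetoid) := continuous_quot_mk
    have hU : IsOpen (Quotient.mk P.ptSetoid ⁻¹' W) := hW.preimage hmk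
    have heq : (fun q => Quotient.mk P.ptSetoid (Gmap P m hm q)) ⁻¹' W =
        Gmap P m hm ⁻¹' (Quotient.mk P.ptSetoid ⁻¹' W) := rfl
    rw [heq]
    refine G_cont_aux P m hm hU fun z z' hz hzz' => ?_
    show Quotient.mk P.ptSetoid z' ∈ W
    rwa [Quotient.sound (s := P.ptSetoid) hzz']

end Stmt4Aux

/-- the trail space `𝒱^path` of a natural space `𝒱` is a natural space
(it is a pre-natural space by construction, `P.trailSpace`), the map
`p ↦ (p♯(0),p♯(1),…)` sends points to points and induces a homeomorphism
`𝒱/≡ ≃ₜ 𝒱^path/≡`, whose inverse is induced by the map sending a nonempty trail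
to its last element and the empty trail to the maximal dot `m`. -/
theorem stmt4 {V : Type} (P : PreNaturalSpace V) (m : V) (hm : ∀ a, P.refines a m)
    (hP : P.AllDotsInhabited) :
    P.trailSpace.IsNaturalSpace ∧
    (∀ p : P.Pt, ∃ t : P.trailSpace.Pt, ∀ n, (t.1 n).1 = segList p.1 n) ∧
    (∀ q : P.trailSpace.Pt, ∃ r : P.Pt, ∀ n, r.1 n = P.lastDot m (q.1 n)) ∧
    ∃ h : Quotient P.ptSetoid ≃ₜ Quotient P.trailSpace.ptSetoid,
      (∀ (p : P.Pt) (t : P.trailSpace.Pt), (∀ n, (t.1 n).1 = segList p.1 n) →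
        h (Quotient.mk P.ptSetoid p) = Quotient.mk P.trailSpace.ptSetoid t) ∧
      (∀ (q : P.trailSpace.Pt) (r : P.Pt), (∀ n, r.1 n = P.lastDot m (q.1 n)) →
        h.symm (Quotient.mk P.trailSpace.ptSetoid q) = Quotient.mk P.ptSetoid r) := by
  open Stmt4Aux in
  refine ⟨⟨⟨⟨[], List.isChain_nil⟩, fun a => List.nil_prefix⟩, fun l => ?_⟩,
    fun p => ⟨Fmap P p, fun n => rfl⟩,
    fun q => ⟨Gmap P m hm q, fun n => rfl⟩,
    homeo P m hm, fun p t ht => ?_, fun q r hr => ?_⟩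
  · -- every trail begins a point of the trail space
    obtain ⟨p0, hp0, hbeg⟩ := hP (P.lastDot m l)
    obtain ⟨j, hj⟩ := hbeg
    have hp' : P.IsPoint fun i => p0 (j + i) := shift_isPoint P hp0 j
    have hjc : ∀ x ∈ l.1.getLast?, P.strict (p0 (j + 0)) x := by
      intro x hx
      rw [lastDot_of_getLast? P (Option.mem_def.mp hx)] at hj
      exact hj
    exact ⟨_, ext_isPoint P l hp' hjc, ext_begins P l hp' hjc⟩
  · -- compatibility of h with F
    have ht' : t = Fmap P p := Subtype.ext (funext fun n => Subtype.ext (ht n))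
    rw [ht']
    rfl
  · -- compatibility of h.symm with G
    have hr' : r = Gmap P m hm q := Subtype.ext (funext hr)
    rw [hr']
    rfl
end

section
/- Let f be a trail morphism from a natural space 𝒱 to a natural space 𝒲. Then the induced map sending a point p of 𝒱 to the point f(p) := f(p♯(0)),f(p♯(1)),… of 𝒲 is continuous with respect to the natural topologies. -/
/-! ## Auxiliary lemmas for Statement 5 -/

namespace PreNaturalSpace

variable {V W : Type}

lemma segList_zero (p : ℕ → V) : segList p 0 = [] := by rw [segList]

open Classical in
lemma segList_succ (p : ℕ → V) (n : ℕ) :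
    segList p (n + 1) = if (segList p n).getLast? = some (p n) then segList p n
      else segList p n ++ [p n] := by
  rw [segList]

lemma segList_getLast?' (p : ℕ → V) (n : ℕ) :
    (segList p (n + 1)).getLast? = some (p n) := by
  rw [segList_succ]
  split
  · assumption
  · exact List.getLast?_concat

lemma segList_prefix_succ (p : ℕ → V) (n : ℕ) : segList p n <+: segList p (n + 1) := by
  rw [segList_succ]
  split
  · exact List.prefix_refl _
  · exact List.prefix_append _ _

lemma segList_prefix_le (p : ℕ → V) {n k : ℕ} (h : n ≤ k) :
    segList p n <+: segList p k := by
  induction h with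
  | refl => exact List.prefix_refl _
  | step h ih => exact ih.trans (segList_prefix_succ p _)

lemma segList_congr {p q : ℕ → V} : ∀ {n : ℕ}, (∀ j < n, p j = q j) →
    segList p n = segList q n := by
  intro n
  induction n with
  | zero => intro _; rfl
  | succ n ih =>
    intro h
    have hn : ∀ j < n, p j = q j := fun j hj => h j (hj.trans (Nat.lt_succ_self n))
    have hpq := h n (Nat.lt_succ_self n)
    rw [segList_succ, segList_succ, ih hn, hpq]

variable (P : PreNaturalSpace V)

lemma strict_index_lt {p : ℕ → V} (hp : P.IsPoint p) {i j : ℕ}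
    (h : P.strict (p i) (p j)) : j < i := by
  by_contra hle
  push_neg at hle
  exact h.2 (P.refines_antisymm _ _ h.1 (P.refines_of_le hp.mono hle))

lemma segList_chain' {p : ℕ → V} (hp : P.IsPoint p) (n : ℕ) :
    (segList p n).Chain' fun a b => P.strict b a := by
  induction n with
  | zero => rw [segList_zero]; exact List.isChain_nil
  | succ n ih =>
    rw [segList_succ]
    split
    · exact ih
    · rename_i h
      show List.IsChain _ (segList p n ++ [p n])
      rw [List.isChain_append]
      refine ⟨ih, List.isChain_singleton _, fun x hx y hy => ?_⟩
      rw [List.head?_cons, Option.mem_some_iff] at hy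
      subst hy
      cases n with
      | zero => rw [segList_zero] at hx; simp at hx
      | succ k =>
        rw [Option.mem_def, segList_getLast?', Option.some_inj] at hx
        subst hx
        refine ⟨hp.mono _, fun he => h ?_⟩
        rw [segList_getLast?', he]

/-- The canonical trail sequence `p♯` of a point `p`. -/
noncomputable def trailPt {p : ℕ → V} (hp : P.IsPoint p) : ℕ → P.Trail :=
  fun n => ⟨segList p n, P.segList_chain' hp n⟩

lemma mem_getLast?_segList (p : ℕ → V) (m : ℕ) :
    p m ∈ (segList p (m + 1)).getLast? := by
  rw [Option.mem_def, segList_getLast?']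

lemma trailPt_isPoint {p : ℕ → V} (hp : P.IsPoint p) :
    P.trailSpace.IsPoint (P.trailPt hp) := by
  constructor
  · intro n
    show segList p n <+: segList p (n + 1)
    exact segList_prefix_succ p n
  · intro n
    match n with
    | 0 =>
      refine ⟨1, ?_, ?_⟩
      · show segList p 0 <+: segList p 1
        rw [segList_zero]; exact List.nil_prefix
      · intro he
        have h2 := congrArg (fun t : P.Trail => t.1.getLast?) he
        simp only [trailPt] at h2
        rw [segList_getLast?', segList_zero] at h2
        simp at h2
    | Nat.succ j =>
      obtain ⟨i, hi⟩ := hp.shrink j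
      have hji : j < i := P.strict_index_lt hp hi
      refine ⟨i + 1, ?_, ?_⟩
      · show segList p (j + 1) <+: segList p (i + 1)
        exact segList_prefix_le p (by omega)
      · intro he
        have h2 := congrArg (fun t : P.Trail => t.1.getLast?) he
        simp only [trailPt] at h2
        rw [segList_getLast?', segList_getLast?', Option.some_inj] at h2
        exact hi.2 h2
  · intro a b hab
    obtain ⟨x, hx, y, hy, hxy⟩ := hab
    obtain ⟨m, hm⟩ := hp.decides x y hxy
    refine ⟨m + 1, ?_⟩
    rcases hm with hm | hm
    · exact Or.inl ⟨p m, mem_getLast?_segList p m, x, hx, hm⟩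
    · exact Or.inr ⟨p m, mem_getLast?_segList p m, y, hy, hm⟩

lemma induced_reflects {Q : PreNaturalSpace W} {f : RefMorphism P.trailSpace Q}
    {g : P.Pt → Q.Pt} (hg : P.InducedByTrailMorphism Q f g) {p q : P.Pt}
    (h : Q.pApart (g p) (g q)) : P.pApart p q := by
  obtain ⟨tp, htp, hgp⟩ := hg p
  obtain ⟨tq, htq, hgq⟩ := hg q
  rw [hgp, hgq] at h
  obtain ⟨n, hn⟩ := h
  obtain ⟨n', hn'⟩ := f.reflects_apart tp.1 tq.1 tp.2 tq.2 ⟨n, hn⟩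
  obtain ⟨x, hx, y', hy, hxy⟩ := hn'
  rw [htp n'] at hx
  rw [htq n'] at hy
  cases n' with
  | zero => rw [segList_zero] at hx; simp at hx
  | succ j =>
    rw [Option.mem_def, segList_getLast?', Option.some_inj] at hx hy
    refine ⟨j, ?_⟩
    rw [hx, hy]
    exact hxy

lemma natOpen_saturated {U : Set P.Pt} (hU : P.NatOpen U) {x y : P.Pt}
    (hx : x ∈ U) (h : ¬ P.pApart y x) : y ∈ U := by
  rcases hU x hx y with h' | ⟨m, hm⟩
  · exact absurd h' h
  · exact hm (y.2.shrink m)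

/-- Splicing: follow `y` up to `m'`, then continue with the tail of `z` from `k`. -/
def splice (y z : ℕ → V) (m' k : ℕ) : ℕ → V :=
  fun n => if n < m' then y n else z (k + (n - m'))

lemma splice_isPoint {y z : ℕ → V} (hy : P.IsPoint y) (hz : P.IsPoint z)
    {m' k : ℕ} (hk : P.strict (z k) (y m')) : P.IsPoint (splice y z m' k) := by
  constructor
  · intro n
    by_cases h1 : n + 1 < m'
    · have h2 : n < m' := by omega
      simp only [splice, if_pos h1, if_pos h2]
      exact hy.mono n
    · by_cases h2 : n < m'
      · simp only [splice, if_neg h1, if_pos h2]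
        have e : k + (n + 1 - m') = k := by omega
        rw [e]
        exact P.refines_trans _ _ _ hk.1 (P.refines_of_le hy.mono (by omega : n ≤ m'))
      · simp only [splice, if_neg h1, if_neg h2]
        have e : k + (n + 1 - m') = (k + (n - m')) + 1 := by omega
        rw [e]
        exact hz.mono _
  · intro n
    by_cases h : n < m'
    · refine ⟨m', ?_⟩
      have e1 : splice y z m' k m' = z k := by simp [splice]
      have e2 : splice y z m' k n = y n := by simp [splice, h]
      rw [e1, e2]
      refine ⟨P.refines_trans _ _ _ hk.1 (P.refines_of_le hy.mono (by omega : n ≤ m')), ?_⟩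
      intro he
      have h0 : P.refines (y m') (y n) := P.refines_of_le hy.mono (by omega)
      rw [← he] at h0
      exact hk.2 (P.refines_antisymm _ _ hk.1 h0)
    · obtain ⟨i, hi⟩ := hz.shrink (k + (n - m'))
      have hlt : k + (n - m') < i := P.strict_index_lt hz hi
      refine ⟨m' + (i - k), ?_⟩
      have e1 : splice y z m' k (m' + (i - k)) = z i := by
        simp only [splice, if_neg (by omega : ¬ m' + (i - k) < m')]
        congr 1
        omega
      have e2 : splice y z m' k n = z (k + (n - m')) := by
        simp only [splice, if_neg h]
      rw [e1, e2]
      exact hi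
  · intro a b hab
    obtain ⟨i, hi⟩ := hz.decides a b hab
    refine ⟨m' + (max i k - k), ?_⟩
    have e : splice y z m' k (m' + (max i k - k)) = z (max i k) := by
      simp only [splice, if_neg (by omega : ¬ m' + (max i k - k) < m')]
      congr 1
      omega
    rw [e]
    have hr : P.refines (z (max i k)) (z i) := P.refines_of_le hz.mono (le_max_left i k)
    rcases hi with hi | hi
    · exact Or.inl (P.apart_symm _ _ (P.apart_mono _ _ _ hr (P.apart_symm _ _ hi)))
    · exact Or.inr (P.apart_symm _ _ (P.apart_mono _ _ _ hr (P.apart_symm _ _ hi)))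

lemma splice_equiv {y z : ℕ → V} (hy : P.IsPoint y) (hz : P.IsPoint z)
    {m' k : ℕ} (hk : P.strict (z k) (y m')) (n : ℕ) :
    ¬ P.apart (splice y z m' k n) (z n) := by
  intro hap
  by_cases h : n < m'
  · simp only [splice, if_pos h] at hap
    have h1 : P.refines (z (max k n)) (z n) := P.refines_of_le hz.mono (le_max_right k n)
    have h2 : P.refines (z (max k n)) (y n) :=
      P.refines_trans _ _ _ (P.refines_of_le hz.mono (le_max_left k n))
        (P.refines_trans _ _ _ hk.1 (P.refines_of_le hy.mono (by omega : n ≤ m')))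
    have h3 : P.apart (y n) (z (max k n)) := P.apart_mono _ _ _ h1 hap
    exact P.apart_irrefl _ (P.apart_mono _ _ _ h2 (P.apart_symm _ _ h3))
  · simp only [splice, if_neg h] at hap
    have h1 : P.refines (z (max (k + (n - m')) n)) (z n) :=
      P.refines_of_le hz.mono (le_max_right _ n)
    have h2 : P.refines (z (max (k + (n - m')) n)) (z (k + (n - m'))) :=
      P.refines_of_le hz.mono (le_max_left _ n)
    have h3 : P.apart (z (k + (n - m'))) (z (max (k + (n - m')) n)) :=
      P.apart_mono _ _ _ h1 hap
    exact P.apart_irrefl _ (P.apart_mono _ _ _ h2 (P.apart_symm _ _ h3))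

end PreNaturalSpace

/-- the point map induced by a trail morphism (sending a point `p` to
`f(p♯(0)), f(p♯(1)), …`) exists and is continuous for the natural topologies. -/
theorem stmt5 {V W : Type} (P : PreNaturalSpace V) (Q : PreNaturalSpace W)
    (hP : P.IsNaturalSpace) (hQ : Q.IsNaturalSpace) (f : RefMorphism P.trailSpace Q) :
    (∃ g : P.Pt → Q.Pt, P.InducedByTrailMorphism Q f g) ∧
    ∀ g : P.Pt → Q.Pt, P.InducedByTrailMorphism Q f g → Continuous g := by
  classical
  constructor
  · refine ⟨fun p => f.pointMap ⟨P.trailPt p.2, P.trailPt_isPoint p.2⟩, fun p => ?_⟩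
    exact ⟨⟨P.trailPt p.2, P.trailPt_isPoint p.2⟩, fun n => rfl, rfl⟩
  · intro g hg
    rw [continuous_def]
    intro U hU
    have hU' : Q.NatOpen U := hU
    show P.NatOpen (g ⁻¹' U)
    intro x hx y
    rcases hU' (g x) hx (g y) with hap | ⟨m, hm⟩
    · exact Or.inl (P.induced_reflects hg hap)
    · refine Or.inr ⟨m, fun z hz => ?_⟩
      obtain ⟨k, hk⟩ := hz
      set z' : P.Pt := ⟨PreNaturalSpace.splice y.1 z.1 m k, P.splice_isPoint y.2 z.2 hk⟩
        with hz'def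
      obtain ⟨ty, hty, hgy⟩ := hg y
      obtain ⟨tz', htz', hgz'⟩ := hg z'
      have hseg : segList z'.1 m = segList y.1 m := by
        apply PreNaturalSpace.segList_congr
        intro j hj
        show PreNaturalSpace.splice y.1 z.1 m k j = y.1 j
        simp [PreNaturalSpace.splice, hj]
      have hdot : (g z').1 m = (g y).1 m := by
        rw [hgy, hgz']
        show f.toFun (tz'.1 m) = f.toFun (ty.1 m)
        congr 1
        apply Subtype.ext
        rw [htz', hty, hseg]
      have hz'U : g z' ∈ U := by
        apply hm
        show Q.begins (g z').1 ((g y).1 m)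
        rw [← hdot]
        exact (g z').2.shrink m
      have hne : ¬ Q.pApart (g z) (g z') := by
        intro hap
        obtain ⟨n, hn⟩ := P.induced_reflects hg hap
        exact P.splice_equiv y.2 z.2 hk n (P.apart_symm _ _ hn)
      exact Q.natOpen_saturated hU' hz'U hne
end
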